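/- Let q be transcendental over ℚ and let A = ⊗_{i=1}^{k} ℂ[aᵢ^{±1}, bᵢ]^q be the algebra generated by invertible aᵢ and bᵢ with bᵢaᵢ = q aᵢbᵢ and with generators of different indices commuting. Let each Aᵢ be (aᵢ, bᵢ; 0, aᵢ⁻¹) or (aᵢ, 0; bᵢ, aᵢ⁻¹), and let t₀ = Trace A₁⁽⁰⁾⋯A_k⁽⁰⁾ ∈ ℤ, where Aᵢ⁽⁰⁾ is obtained by setting aᵢ = bᵢ = 1. Then T_n(Trace A₁⋯A_k) is a sum of exactly T_n(t₀) monomials of the form q^ξ ∏ᵢ aᵢ^{αᵢ} bᵢ^{βᵢ} with ξ, αᵢ ∈ ℤ, βᵢ ≥ 0, each with coefficient +1. -/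
import Mathlib


/-- The normalized Chebyshev polynomial of the first kind, evaluated in a ring:
`T_{n+1}(t) = t·T_n(t) − T_{n−1}(t)`, `T_1(t) = t`, `T_0(t) = 2`. -/
def chebT {A : Type*} [Ring A] : ℕ → A → A
  | 0, _ => 2
  | 1, t => t
  | n + 2, t => t * chebT (n + 1) t - chebT n t

/-- The triangular matrix `(a, b; 0, a⁻¹)` (if `upper`) or `(a, 0; b, a⁻¹)` (if not). -/
def triMat {A : Type*} [Ring A] (upper : Bool) (a : Aˣ) (b : A) :
    Matrix (Fin 2) (Fin 2) A :=
  if upper then !![(a : A), b; 0, ((a⁻¹ : Aˣ) : A)]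
  else !![(a : A), 0; b, ((a⁻¹ : Aˣ) : A)]

/-- The monomial `∏ᵢ aᵢ^{αᵢ} ∏ᵢ bᵢ^{βᵢ}` associated to exponents
`m = (α, β) : (Fin k → ℤ) × (Fin k → ℕ)`. -/
def qMonomial {A : Type*} [Ring A] {k : ℕ} (a : Fin k → Aˣ) (b : Fin k → A)
    (m : (Fin k → ℤ) × (Fin k → ℕ)) : A :=
  (List.ofFn fun i => ((a i ^ m.1 i : Aˣ) : A)).prod *
    (List.ofFn fun i => b i ^ m.2 i).prod




section Helpers
variable {A : Type*} [Ring A]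

lemma prod_ofFn_one' {M : Type*} [Monoid M] {k : ℕ} (f : Fin k → M) (h : ∀ j, f j = 1) :
    (List.ofFn f).prod = 1 :=
  List.prod_eq_one (by simp [List.mem_ofFn]; exact h)

lemma prod_ofFn_single' {M : Type*} [Monoid M] :
    ∀ {k : ℕ} (f : Fin k → M) (i : Fin k), (∀ j, j ≠ i → f j = 1) → (List.ofFn f).prod = f i := by
  intro k
  induction k with
  | zero => exact fun f i _ => i.elim0
  | succ k ih =>
    intro f i h
    rw [List.ofFn_succ, List.prod_cons]
    induction i using Fin.cases with
    | zero =>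
      rw [prod_ofFn_one' _ fun j => h j.succ (Fin.succ_ne_zero j), mul_one]
    | succ i =>
      rw [h 0 (Fin.succ_ne_zero i).symm, one_mul]
      exact ih _ i fun j hj => h j.succ (by simpa using hj)

lemma prod_ofFn_mul' {M : Type*} [Monoid M] :
    ∀ {k : ℕ} (f g : Fin k → M), (∀ i j : Fin k, j < i → Commute (f i) (g j)) →
      (List.ofFn f).prod * (List.ofFn g).prod = (List.ofFn fun i => f i * g i).prod := by
  intro k
  induction k with
  | zero => intro f g _; simp
  | succ k ih =>
    intro f g h
    rw [List.ofFn_succ, List.ofFn_succ, List.ofFn_succ, List.prod_cons, List.prod_cons,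
      List.prod_cons]
    have hc : Commute ((List.ofFn fun i => f i.succ).prod) (g 0) := by
      refine (Commute.list_prod_right _ _ ?_).symm
      intro x hx
      rw [List.mem_ofFn] at hx
      obtain ⟨j, rfl⟩ := hx
      exact (h j.succ 0 (Fin.succ_pos j)).symm
    calc f 0 * (List.ofFn fun i => f i.succ).prod * (g 0 * (List.ofFn fun i => g i.succ).prod)
        = f 0 * ((List.ofFn fun i => f i.succ).prod * g 0) * (List.ofFn fun i => g i.succ).prod := by
          rw [mul_assoc, mul_assoc, mul_assoc]
      _ = f 0 * g 0 * ((List.ofFn fun i => f i.succ).prod * (List.ofFn fun i => g i.succ).prod) := by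
          rw [hc.eq]; rw [mul_assoc, mul_assoc, mul_assoc]
      _ = f 0 * g 0 * (List.ofFn fun i => f i.succ * g i.succ).prod := by
          rw [ih _ _ fun i j hij => h i.succ j.succ (by simpa using hij)]

lemma commute_units_zpow' {x : A} {u : Aˣ} (h : Commute x ↑u) (z : ℤ) : Commute x ↑(u ^ z) := by
  obtain ⟨n⟩ | ⟨n⟩ := z
  · rw [Int.ofNat_eq_coe, zpow_natCast, Units.val_pow_eq_pow_val]; exact h.pow_right n
  · rw [zpow_negSucc]
    have : Commute x ↑(u ^ (n + 1)) := by
      rw [Units.val_pow_eq_pow_val]; exact h.pow_right _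
    exact this.units_inv_right

end Helpers

section Move
variable {A : Type*} [Ring A] [Algebra ℂ A]

lemma move_right' (x : A) : ∀ (l : List (A × ℂ)), (∀ p ∈ l, x * p.1 = p.2 • (p.1 * x)) →
    x * (l.map Prod.fst).prod = (l.map Prod.snd).prod • ((l.map Prod.fst).prod * x)
  | [], _ => by simp
  | p :: l, h => by
      simp only [List.map_cons, List.prod_cons]
      have h1 := h p (by simp)
      have h2 := move_right' x l fun r hr => h r (by simp [hr])
      calc x * (p.1 * (l.map Prod.fst).prod) = (x * p.1) * (l.map Prod.fst).prod := by
            rw [mul_assoc]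
        _ = p.2 • (p.1 * (x * (l.map Prod.fst).prod)) := by rw [h1, smul_mul_assoc, mul_assoc]
        _ = p.2 • (p.1 * ((l.map Prod.snd).prod • ((l.map Prod.fst).prod * x))) := by rw [h2]
        _ = (p.2 * (l.map Prod.snd).prod) • (p.1 * (l.map Prod.fst).prod * x) := by
            rw [mul_smul_comm, smul_smul, mul_assoc]

lemma move_left' (Y : A) : ∀ (l : List (A × ℂ)), (∀ p ∈ l, p.1 * Y = p.2 • (Y * p.1)) →
    (l.map Prod.fst).prod * Y = (l.map Prod.snd).prod • (Y * (l.map Prod.fst).prod)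
  | [], _ => by simp
  | p :: l, h => by
      simp only [List.map_cons, List.prod_cons]
      have h1 := h p (by simp)
      have h2 := move_left' Y l fun r hr => h r (by simp [hr])
      calc p.1 * (l.map Prod.fst).prod * Y = p.1 * ((l.map Prod.fst).prod * Y) := by
            rw [mul_assoc]
        _ = (l.map Prod.snd).prod • ((p.1 * Y) * (l.map Prod.fst).prod) := by
            rw [h2, mul_smul_comm, mul_assoc]
        _ = (p.2 * (l.map Prod.snd).prod) • (Y * (p.1 * (l.map Prod.fst).prod)) := by
            rw [h1, smul_mul_assoc, smul_smul, mul_comm p.2, mul_assoc]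

/-- move a single element past a single power of a unit, with `q`-commutation. -/
lemma move_unit_zpow' {q : ℂ} (hq0 : q ≠ 0) {u : Aˣ} {x : A}
    (h : x * u = q • ((u : A) * x)) : ∀ z : ℤ, x * ↑(u ^ z) = q ^ z • (↑(u ^ z) * x) := by
  have hnat : ∀ (v : Aˣ) (c : ℂ), x * v = c • ((v : A) * x) →
      ∀ n : ℕ, x * ↑(v ^ n) = c ^ n • (↑(v ^ n) * x) := by
    intro v c hv n
    induction n with
    | zero => simp
    | succ n ih =>
      rw [pow_succ, Units.val_mul]
      calc x * (↑(v ^ n) * ↑v) = (x * ↑(v ^ n)) * ↑v := by rw [mul_assoc]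
        _ = c ^ n • (↑(v ^ n) * (x * ↑v)) := by rw [ih, smul_mul_assoc, mul_assoc]
        _ = (c ^ n * c) • (↑(v ^ n) * ↑v * x) := by
            rw [hv, mul_smul_comm, smul_smul, mul_assoc]
        _ = c ^ (n + 1) • (↑(v ^ n) * ↑v * x) := by rw [pow_succ]
  have hinv : ∀ (v : Aˣ) (c : ℂ), c ≠ 0 → x * v = c • ((v : A) * x) →
      x * ↑(v⁻¹) = c⁻¹ • (↑(v⁻¹) * x) := by
    intro v c hc hv
    have key : (↑(v⁻¹) : A) * x = c • (x * ↑(v⁻¹)) := by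
      calc (↑(v⁻¹) : A) * x = ↑(v⁻¹) * (x * ↑v) * ↑(v⁻¹) := by
            rw [mul_assoc, mul_assoc, Units.mul_inv, mul_one]
        _ = c • (↑(v⁻¹) * ↑v * (x * ↑(v⁻¹))) := by
            rw [hv, mul_smul_comm, smul_mul_assoc]; congr 1; noncomm_ring
        _ = c • (x * ↑(v⁻¹)) := by rw [Units.inv_mul, one_mul]
    rw [key, smul_smul, inv_mul_cancel₀ hc, one_smul]
  intro z
  obtain ⟨n⟩ | ⟨n⟩ := z
  · rw [Int.ofNat_eq_coe, zpow_natCast, zpow_natCast]; exact hnat u q h n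
  · rw [zpow_negSucc, zpow_negSucc]
    exact hinv (u ^ (n + 1)) (q ^ (n + 1)) (pow_ne_zero _ hq0) (by
      rw [Units.val_pow_eq_pow_val] at *
      exact hnat u q h (n + 1) |>.trans (by rw [Units.val_pow_eq_pow_val]))

lemma move_pow' {x Y : A} {c : ℂ} (h : x * Y = c • (Y * x)) :
    ∀ m : ℕ, x ^ m * Y = c ^ m • (Y * x ^ m) := by
  intro m
  induction m with
  | zero => simp
  | succ m ih =>
    calc x ^ (m + 1) * Y = x * (x ^ m * Y) := by rw [pow_succ', mul_assoc]
      _ = c ^ m • ((x * Y) * x ^ m) := by rw [ih, mul_smul_comm, mul_assoc]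
      _ = (c ^ m * c) • (Y * x ^ (m + 1)) := by
          rw [h, smul_mul_assoc, smul_smul, mul_assoc, pow_succ']
      _ = c ^ (m + 1) • (Y * x ^ (m + 1)) := by rw [← pow_succ, pow_succ]

lemma prod_q_zpow {q : ℂ} (hq0 : q ≠ 0) :
    ∀ l : List ℤ, (l.map fun z => q ^ z).prod = q ^ l.sum
  | [] => by simp
  | z :: l => by
      rw [List.map_cons, List.prod_cons, List.sum_cons, zpow_add₀ hq0, prod_q_zpow hq0 l]

end Move

section Cheb
variable {A : Type*} [Ring A] [DecidableEq A]

lemma multiset_sum_sub {M N : Multiset A} (h : N ≤ M) : (M - N).sum = M.sum - N.sum := by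
  have h5 : (M - N) + N = M := tsub_add_cancel_of_le h
  have := congrArg Multiset.sum h5
  rw [Multiset.sum_add] at this
  exact eq_sub_of_add_eq this

lemma multiset_card_sub_int {M N : Multiset A} (h : N ≤ M) :
    (Multiset.card (M - N) : ℤ) = Multiset.card M - Multiset.card N := by
  have h5 : (M - N) + N = M := tsub_add_cancel_of_le h
  have := congrArg Multiset.card h5
  rw [Multiset.card_add] at this
  omega

lemma cheb_pos (X Y : A) (hXY : X * Y = 1) (hYX : Y * X = 1) (R : Multiset A)
    (G : A → Prop) (hG1 : G 1) (hGX : G X) (hGY : G Y) (hGR : ∀ r ∈ R, G r)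
    (hGmul : ∀ u v, G u → G v → G (u * v)) (n : ℕ) :
    ∃ W : Multiset A, (Multiset.card W : ℤ) = chebT n (2 + (Multiset.card R : ℤ)) ∧
      chebT n (X + Y + R.sum) = W.sum ∧ ∀ w ∈ W, G w := by
  set t : A := X + Y + R.sum with ht
  set c : ℤ := 2 + (Multiset.card R : ℤ) with hc
  -- the strong invariant
  suffices h : ∀ n : ℕ, ∃ W W' P Q P' Q' : Multiset A,
      P + Q = W ∧ P' + Q' = W' ∧
      chebT n t = W.sum ∧ chebT (n+1) t = W'.sum ∧
      (Multiset.card W : ℤ) = chebT n c ∧ (Multiset.card W' : ℤ) = chebT (n+1) c ∧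
      (∀ w ∈ W, G w) ∧ (∀ w ∈ W', G w) ∧
      (P.map (fun w => X * w) + Q' ≤ W') ∧ (Q.map (fun w => Y * w) + P' ≤ W') by
    obtain ⟨W, _, _, _, _, _, _, _, h3, _, h5, _, h7, _, _, _⟩ := h n
    exact ⟨W, h5, h3, h7⟩
  intro n
  induction n with
  | zero =>
    refine ⟨{1, 1}, X ::ₘ Y ::ₘ R, {1}, {1}, X ::ₘ R, {Y}, ?_, ?_, ?_, ?_, ?_, ?_, ?_, ?_, ?_, ?_⟩
    · rfl
    · rw [Multiset.cons_add, add_comm R {Y}, Multiset.singleton_add]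
    · simp [chebT]; norm_num
    · simp [chebT, ht, Multiset.sum_cons, add_assoc]
    · simp [chebT]
    · simp [chebT, hc]; push_cast; ring
    · intro w hw; simp at hw; subst hw; exact hG1
    · intro w hw
      simp only [Multiset.mem_cons] at hw
      rcases hw with rfl | rfl | h
      · exact hGX
      · exact hGY
      · exact hGR _ h
    · simp only [Multiset.map_singleton, mul_one, Multiset.singleton_add]
      exact Multiset.cons_le_cons X (Multiset.cons_le_cons Y (Multiset.zero_le R))
    · simp only [Multiset.map_singleton, mul_one]
      rw [Multiset.singleton_add, Multiset.cons_swap]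
  | succ n ih =>
    obtain ⟨W, W', P, Q, P', Q', hPQ, hPQ', hsW, hsW', hcW, hcW', hgW, hgW', hinv1, hinv2⟩ := ih
    -- abbreviations
    set NPa : Multiset A := W'.map (fun w => X * w) - Q.map (fun w => X * (Y * w)) with hNPa
    set NPr : Multiset A := R.bind (fun r => W'.map (fun w => r * w)) with hNPr
    set NQ : Multiset A := W'.map (fun w => Y * w) - P.map (fun w => Y * (X * w)) with hNQ
    have hYQ : Q.map (fun w => Y * w) ≤ W' := le_trans le_self_add hinv2
    have hXP : P.map (fun w => X * w) ≤ W' := le_trans le_self_add hinv1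
    -- collapse lemmas
    have hQcol : Q.map (fun w => X * (Y * w)) = Q := by
      rw [show (fun w => X * (Y * w)) = fun w : A => id w from funext fun w => by
        rw [← mul_assoc, hXY, one_mul, id]]
      exact Multiset.map_id Q
    have hPcol : P.map (fun w => Y * (X * w)) = P := by
      rw [show (fun w => Y * (X * w)) = fun w : A => id w from funext fun w => by
        rw [← mul_assoc, hYX, one_mul, id]]
      exact Multiset.map_id P
    have hQle : Q.map (fun w => X * (Y * w)) ≤ W'.map (fun w => X * w) := by
      have : Q.map (fun w => X * (Y * w)) = (Q.map (fun w => Y * w)).map (fun w => X * w) := by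
        rw [Multiset.map_map]; rfl
      rw [this]; exact Multiset.map_le_map hYQ
    have hPle : P.map (fun w => Y * (X * w)) ≤ W'.map (fun w => Y * w) := by
      have : P.map (fun w => Y * (X * w)) = (P.map (fun w => X * w)).map (fun w => Y * w) := by
        rw [Multiset.map_map]; rfl
      rw [this]; exact Multiset.map_le_map hXP
    have key1 : P'.map (fun w => X * w) ≤ NPa := by
      rw [hNPa, le_tsub_iff_right hQle]
      have : P'.map (fun w => X * w) + Q.map (fun w => X * (Y * w))
          = (P' + Q.map (fun w => Y * w)).map (fun w => X * w) := by
        rw [Multiset.map_add, Multiset.map_map]; rfl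
      rw [this]
      exact Multiset.map_le_map (by rwa [add_comm] at hinv2)
    have key2 : Q'.map (fun w => Y * w) ≤ NQ := by
      rw [hNQ, le_tsub_iff_right hPle]
      have : Q'.map (fun w => Y * w) + P.map (fun w => Y * (X * w))
          = (Q' + P.map (fun w => X * w)).map (fun w => Y * w) := by
        rw [Multiset.map_add, Multiset.map_map]; rfl
      rw [this]
      exact Multiset.map_le_map (by rwa [add_comm] at hinv1)
    -- sums
    have hsNPa : NPa.sum = X * W'.sum - Q.sum := by
      rw [hNPa, multiset_sum_sub hQle, hQcol]
      congr 1
      have := Multiset.sum_map_mul_left (a := X) (s := W') (f := id)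
      simpa using this
    have hsNQ : NQ.sum = Y * W'.sum - P.sum := by
      rw [hNQ, multiset_sum_sub hPle, hPcol]
      congr 1
      have := Multiset.sum_map_mul_left (a := Y) (s := W') (f := id)
      simpa using this
    have hsNPr : NPr.sum = R.sum * W'.sum := by
      rw [hNPr, Multiset.sum_bind]
      have : (R.map fun r => (W'.map fun w => r * w).sum) = R.map fun r => r * W'.sum := by
        refine Multiset.map_congr rfl fun r _ => ?_
        have := Multiset.sum_map_mul_left (a := r) (s := W') (f := id)
        simpa using this
      rw [this]
      have := Multiset.sum_map_mul_right (a := W'.sum) (s := R) (f := id)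
      simpa using this
    -- cards
    have hcNPa : (Multiset.card NPa : ℤ) = Multiset.card W' - Multiset.card Q := by
      rw [hNPa, multiset_card_sub_int hQle, Multiset.card_map, Multiset.card_map]
    have hcNQ : (Multiset.card NQ : ℤ) = Multiset.card W' - Multiset.card P := by
      rw [hNQ, multiset_card_sub_int hPle, Multiset.card_map, Multiset.card_map]
    have hcNPr : (Multiset.card NPr : ℤ) = Multiset.card R * Multiset.card W' := by
      rw [hNPr, Multiset.card_bind]
      have : (R.map (Multiset.card ∘ fun r => W'.map fun w => r * w))
          = R.map (Function.const A (Multiset.card W')) := by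
        refine Multiset.map_congr rfl fun r _ => ?_
        simp
      rw [this, Multiset.map_const, Multiset.sum_replicate, smul_eq_mul]
      push_cast; ring
    refine ⟨W', NPa + NPr + NQ, P', Q', NPa + NPr, NQ, hPQ', rfl, hsW', ?_, hcW', ?_, hgW', ?_, ?_, ?_⟩
    · -- sum of new W''
      show t * chebT (n+1) t - chebT n t = _
      rw [hsW, hsW',
        Multiset.sum_add, Multiset.sum_add, hsNPa, hsNPr, hsNQ, ht]
      have hW : W.sum = P.sum + Q.sum := by rw [← hPQ, Multiset.sum_add]
      rw [hW]; noncomm_ring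
    · -- card of new W''
      show ((Multiset.card (NPa + NPr + NQ) : ℕ) : ℤ) = c * chebT (n+1) c - chebT n c
      rw [← hcW, ← hcW']
      have hWc : (Multiset.card W : ℤ) = Multiset.card P + Multiset.card Q := by
        rw [← hPQ, Multiset.card_add]; push_cast; ring
      rw [Multiset.card_add, Multiset.card_add]
      push_cast
      rw [hcNPa, hcNPr, hcNQ, hWc, hc]
      ring
    · -- goodness
      intro w hw
      simp only [Multiset.mem_add] at hw
      rcases hw with (hw | hw) | hw
      · have : w ∈ W'.map (fun w => X * w) := Multiset.mem_of_le (tsub_le_self) hw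
        obtain ⟨v, hv, rfl⟩ := Multiset.mem_map.mp this
        exact hGmul _ _ hGX (hgW' v hv)
      · obtain ⟨r, hr, hw2⟩ := Multiset.mem_bind.mp hw
        obtain ⟨v, hv, rfl⟩ := Multiset.mem_map.mp hw2
        exact hGmul _ _ (hGR r hr) (hgW' v hv)
      · have : w ∈ W'.map (fun w => Y * w) := Multiset.mem_of_le (tsub_le_self) hw
        obtain ⟨v, hv, rfl⟩ := Multiset.mem_map.mp this
        exact hGmul _ _ hGY (hgW' v hv)
    · -- invariant 1
      have h1 : P'.map (fun w => X * w) ≤ NPa + NPr := le_trans key1 le_self_add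
      exact add_le_add h1 (le_refl NQ)
    · -- invariant 2
      rw [add_comm (NPa + NPr) NQ]
      exact add_le_add key2 (le_refl (NPa + NPr))
end Cheb

lemma good_list_prod' {M : Type*} [Monoid M] (G : M → Prop) (hG1 : G 1)
    (hGmul : ∀ u v, G u → G v → G (u * v)) :
    ∀ l : List M, (∀ x ∈ l, G x) → G l.prod
  | [], _ => by simpa using hG1
  | x :: l, h => by
      rw [List.prod_cons]
      exact hGmul _ _ (h x (by simp)) (good_list_prod' G hG1 hGmul l fun y hy => h y (by simp [hy]))

section Mat
variable {A : Type*} [Ring A]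

lemma sum_map_mul (x : A) (s : Multiset A) : (s.map (fun w => x * w)).sum = x * s.sum := by
  simpa using Multiset.sum_map_mul_left (a := x) (s := s) (f := id)

lemma units_val_prod : ∀ l : List Aˣ, ((l.prod : Aˣ) : A) = (l.map Units.val).prod
  | [] => by simp
  | u :: l => by simp [Units.val_mul, units_val_prod l]

lemma good_units_prod (G : A → Prop) (hG1 : G 1) (hGmul : ∀ u v, G u → G v → G (u * v))
    (l : List Aˣ) (h : ∀ u ∈ l, G (u : A)) : G ((l.prod : Aˣ) : A) := by
  rw [units_val_prod]
  refine good_list_prod' G hG1 hGmul _ ?_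
  simp only [List.mem_map]
  rintro x ⟨u, hu, rfl⟩
  exact h u hu

lemma good_units_prod_inv (G : A → Prop) (hG1 : G 1) (hGmul : ∀ u v, G u → G v → G (u * v))
    (l : List Aˣ) (h : ∀ u ∈ l, G ((u⁻¹ : Aˣ) : A)) : G (((l.prod)⁻¹ : Aˣ) : A) := by
  rw [List.prod_inv_reverse]
  refine good_units_prod G hG1 hGmul _ ?_
  intro x hx
  rw [List.mem_reverse, List.mem_map] at hx
  obtain ⟨u, hu, rfl⟩ := hx
  exact h u hu

lemma val_ofFn_prod {k : ℕ} (a : Fin k → Aˣ) :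
    (((List.ofFn a).prod : Aˣ) : A) = (List.ofFn fun i => ((a i : A))).prod := by
  rw [units_val_prod, List.map_ofFn]
  rfl

lemma matProd (G : A → Prop) (hG1 : G 1) (hGmul : ∀ u v, G u → G v → G (u * v)) :
    ∀ {k : ℕ} (a : Fin k → Aˣ) (b : Fin k → A) (upper : Fin k → Bool),
    (∀ i j, Commute ((a i : A)) ((a j : A))) → (∀ i, G ((a i : A))) →
    (∀ i, G (((a i)⁻¹ : Aˣ) : A)) → (∀ i, G (b i)) →
    ∃ R00 R01 R10 R11 : Multiset A,
      ((List.ofFn fun i => triMat (upper i) (a i) (b i)).prod =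
        !![(((List.ofFn a).prod : Aˣ) : A) + R00.sum, R01.sum;
           R10.sum, ((((List.ofFn a).prod)⁻¹ : Aˣ) : A) + R11.sum]) ∧
      ((List.ofFn fun i => if upper i then !![(1 : ℤ), 1; 0, 1] else !![1, 0; 1, 1]).prod =
        !![1 + (Multiset.card R00 : ℤ), (Multiset.card R01 : ℤ);
           (Multiset.card R10 : ℤ), 1 + (Multiset.card R11 : ℤ)]) ∧
      (∀ r ∈ R00 + R01 + R10 + R11, G r) := by
  intro k
  induction k with
  | zero =>
    intro a b upper _ _ _ _
    refine ⟨0, 0, 0, 0, ?_, ?_, ?_⟩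
    · simp [List.ofFn_zero, Matrix.one_fin_two]
    · simp [List.ofFn_zero, Matrix.one_fin_two]
    · intro r hr; simp at hr
  | succ k ih =>
    intro a b upper hca hGa hGai hGb
    obtain ⟨S00, S01, S10, S11, hM, hN, hG⟩ :=
      ih (fun i => a i.succ) (fun i => b i.succ) (fun i => upper i.succ)
        (fun i j => hca i.succ j.succ) (fun i => hGa i.succ) (fun i => hGai i.succ)
        (fun i => hGb i.succ)
    set X' : Aˣ := (List.ofFn fun i => a i.succ).prod with hX'
    have hGX' : G ((X' : Aˣ) : A) := by
      refine good_units_prod G hG1 hGmul _ ?_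
      intro u hu; rw [List.mem_ofFn] at hu; obtain ⟨j, rfl⟩ := hu; exact hGa j.succ
    have hGX'i : G ((X'⁻¹ : Aˣ) : A) := by
      refine good_units_prod_inv G hG1 hGmul _ ?_
      intro u hu; rw [List.mem_ofFn] at hu; obtain ⟨j, rfl⟩ := hu; exact hGai j.succ
    have hcomm0 : Commute ((a 0 : A)) ((X' : A)) := by
      rw [hX', val_ofFn_prod]
      refine Commute.list_prod_right _ _ ?_
      intro x hx
      rw [List.mem_ofFn] at hx
      obtain ⟨j, rfl⟩ := hx
      exact hca 0 j.succ
    have hcommU : Commute (a 0) X' := by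
      apply Units.ext
      simpa [Units.val_mul] using hcomm0.eq
    have hprod : (List.ofFn a).prod = a 0 * X' := by
      rw [List.ofFn_succ, List.prod_cons]
    have hval : (((List.ofFn a).prod : Aˣ) : A) = (a 0 : A) * (X' : A) := by
      rw [hprod, Units.val_mul]
    have hvalinv : ((((List.ofFn a).prod)⁻¹ : Aˣ) : A)
        = (((a 0)⁻¹ : Aˣ) : A) * ((X'⁻¹ : Aˣ) : A) := by
      rw [hprod, mul_inv_rev, ← (hcommU.inv_inv).eq, Units.val_mul]
    rw [List.ofFn_succ (f := fun i => triMat (upper i) (a i) (b i)), List.prod_cons, hM]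
    rw [List.ofFn_succ (f := fun i => if upper i then !![(1 : ℤ), 1; 0, 1] else !![1, 0; 1, 1]),
      List.prod_cons, hN]
    cases hu : upper 0 with
    | true =>
      refine ⟨S00.map (fun w => (a 0 : A) * w) + S10.map (fun w => b 0 * w),
        (b 0 * ((X'⁻¹ : Aˣ) : A)) ::ₘ
          (S01.map (fun w => (a 0 : A) * w) + S11.map (fun w => b 0 * w)),
        S10.map (fun w => (((a 0)⁻¹ : Aˣ) : A) * w),
        S11.map (fun w => (((a 0)⁻¹ : Aˣ) : A) * w), ?_, ?_, ?_⟩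
      · simp only [triMat, if_true]
        rw [Matrix.mul_fin_two]
        have e00 : (a 0 : A) * ((X' : A) + S00.sum) + b 0 * S10.sum
            = (((List.ofFn a).prod : Aˣ) : A)
              + (S00.map (fun w => (a 0 : A) * w) + S10.map (fun w => b 0 * w)).sum := by
          rw [Multiset.sum_add, sum_map_mul, sum_map_mul, hval, mul_add]
          abel
        have e01 : (a 0 : A) * S01.sum + b 0 * (((X'⁻¹ : Aˣ) : A) + S11.sum)
            = ((b 0 * ((X'⁻¹ : Aˣ) : A)) ::ₘ
                (S01.map (fun w => (a 0 : A) * w) + S11.map (fun w => b 0 * w))).sum := by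
          rw [Multiset.sum_cons, Multiset.sum_add, sum_map_mul, sum_map_mul, mul_add]
          abel
        have e10 : (0 : A) * ((X' : A) + S00.sum) + (((a 0)⁻¹ : Aˣ) : A) * S10.sum
            = (S10.map (fun w => (((a 0)⁻¹ : Aˣ) : A) * w)).sum := by
          rw [sum_map_mul, zero_mul, zero_add]
        have e11 : (0 : A) * S01.sum + (((a 0)⁻¹ : Aˣ) : A) * (((X'⁻¹ : Aˣ) : A) + S11.sum)
            = ((((List.ofFn a).prod)⁻¹ : Aˣ) : A)
              + (S11.map (fun w => (((a 0)⁻¹ : Aˣ) : A) * w)).sum := by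
          rw [sum_map_mul, hvalinv, mul_add, zero_mul, zero_add]
        rw [e00, e01, e10, e11]
      · simp only [if_true]; rw [Matrix.mul_fin_two]
        have e00 : (1 : ℤ) * (1 + (Multiset.card S00 : ℤ)) + 1 * (Multiset.card S10 : ℤ)
            = 1 + (Multiset.card (S00.map (fun w => (a 0 : A) * w)
                + S10.map (fun w => b 0 * w)) : ℤ) := by
          simp; ring
        have e01 : (1 : ℤ) * (Multiset.card S01 : ℤ) + 1 * (1 + (Multiset.card S11 : ℤ))
            = (Multiset.card ((b 0 * ((X'⁻¹ : Aˣ) : A)) ::ₘ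
                (S01.map (fun w => (a 0 : A) * w) + S11.map (fun w => b 0 * w))) : ℤ) := by
          simp; ring
        have e10 : (0 : ℤ) * (1 + (Multiset.card S00 : ℤ)) + 1 * (Multiset.card S10 : ℤ)
            = (Multiset.card (S10.map (fun w => (((a 0)⁻¹ : Aˣ) : A) * w)) : ℤ) := by
          simp
        have e11 : (0 : ℤ) * (Multiset.card S01 : ℤ) + 1 * (1 + (Multiset.card S11 : ℤ))
            = 1 + (Multiset.card (S11.map (fun w => (((a 0)⁻¹ : Aˣ) : A) * w)) : ℤ) := by
          simp
        rw [e00, e01, e10, e11]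
      · intro r hr
        simp only [Multiset.mem_add, Multiset.mem_cons, Multiset.mem_map] at hr
        rcases hr with ((((⟨v, hv, rfl⟩ | ⟨v, hv, rfl⟩) | (rfl | (⟨v, hv, rfl⟩ | ⟨v, hv, rfl⟩))) |
          ⟨v, hv, rfl⟩) | ⟨v, hv, rfl⟩)
        · exact hGmul _ _ (hGa 0) (hG v (by simp [hv]))
        · exact hGmul _ _ (hGb 0) (hG v (by simp [hv]))
        · exact hGmul _ _ (hGb 0) hGX'i
        · exact hGmul _ _ (hGa 0) (hG v (by simp [hv]))
        · exact hGmul _ _ (hGb 0) (hG v (by simp [hv]))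
        · exact hGmul _ _ (hGai 0) (hG v (by simp [hv]))
        · exact hGmul _ _ (hGai 0) (hG v (by simp [hv]))
    | false =>
      refine ⟨S00.map (fun w => (a 0 : A) * w),
        S01.map (fun w => (a 0 : A) * w),
        (b 0 * ((X' : Aˣ) : A)) ::ₘ
          (S00.map (fun w => b 0 * w) + S10.map (fun w => (((a 0)⁻¹ : Aˣ) : A) * w)),
        S01.map (fun w => b 0 * w) + S11.map (fun w => (((a 0)⁻¹ : Aˣ) : A) * w), ?_, ?_, ?_⟩
      · simp only [triMat, Bool.false_eq_true, if_false]
        rw [Matrix.mul_fin_two]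
        have e00 : (a 0 : A) * ((X' : A) + S00.sum) + (0 : A) * S10.sum
            = (((List.ofFn a).prod : Aˣ) : A) + (S00.map (fun w => (a 0 : A) * w)).sum := by
          rw [sum_map_mul, hval, mul_add, zero_mul, add_zero]
        have e01 : (a 0 : A) * S01.sum + (0 : A) * (((X'⁻¹ : Aˣ) : A) + S11.sum)
            = (S01.map (fun w => (a 0 : A) * w)).sum := by
          rw [sum_map_mul, zero_mul, add_zero]
        have e10 : b 0 * ((X' : A) + S00.sum) + (((a 0)⁻¹ : Aˣ) : A) * S10.sum
            = ((b 0 * ((X' : Aˣ) : A)) ::ₘ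
                (S00.map (fun w => b 0 * w) + S10.map (fun w => (((a 0)⁻¹ : Aˣ) : A) * w))).sum := by
          rw [Multiset.sum_cons, Multiset.sum_add, sum_map_mul, sum_map_mul, mul_add]
          abel
        have e11 : b 0 * S01.sum + (((a 0)⁻¹ : Aˣ) : A) * (((X'⁻¹ : Aˣ) : A) + S11.sum)
            = ((((List.ofFn a).prod)⁻¹ : Aˣ) : A)
              + (S01.map (fun w => b 0 * w) + S11.map (fun w => (((a 0)⁻¹ : Aˣ) : A) * w)).sum := by
          rw [Multiset.sum_add, sum_map_mul, sum_map_mul, hvalinv, mul_add]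
          abel
        rw [e00, e01, e10, e11]
      · simp only [Bool.false_eq_true, if_false]; rw [Matrix.mul_fin_two]
        have e00 : (1 : ℤ) * (1 + (Multiset.card S00 : ℤ)) + 0 * (Multiset.card S10 : ℤ)
            = 1 + (Multiset.card (S00.map (fun w => (a 0 : A) * w)) : ℤ) := by simp
        have e01 : (1 : ℤ) * (Multiset.card S01 : ℤ) + 0 * (1 + (Multiset.card S11 : ℤ))
            = (Multiset.card (S01.map (fun w => (a 0 : A) * w)) : ℤ) := by simp
        have e10 : (1 : ℤ) * (1 + (Multiset.card S00 : ℤ)) + 1 * (Multiset.card S10 : ℤ)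
            = (Multiset.card ((b 0 * ((X' : Aˣ) : A)) ::ₘ
                (S00.map (fun w => b 0 * w)
                  + S10.map (fun w => (((a 0)⁻¹ : Aˣ) : A) * w))) : ℤ) := by
          simp; ring
        have e11 : (1 : ℤ) * (Multiset.card S01 : ℤ) + 1 * (1 + (Multiset.card S11 : ℤ))
            = 1 + (Multiset.card (S01.map (fun w => b 0 * w)
                + S11.map (fun w => (((a 0)⁻¹ : Aˣ) : A) * w)) : ℤ) := by
          simp; ring
        rw [e00, e01, e10, e11]
      · intro r hr
        simp only [Multiset.mem_add, Multiset.mem_cons, Multiset.mem_map] at hr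
        rcases hr with (((⟨v, hv, rfl⟩ | ⟨v, hv, rfl⟩) | (rfl | (⟨v, hv, rfl⟩ | ⟨v, hv, rfl⟩))) |
          (⟨v, hv, rfl⟩ | ⟨v, hv, rfl⟩))
        · exact hGmul _ _ (hGa 0) (hG v (by simp [hv]))
        · exact hGmul _ _ (hGa 0) (hG v (by simp [hv]))
        · exact hGmul _ _ (hGb 0) hGX'
        · exact hGmul _ _ (hGb 0) (hG v (by simp [hv]))
        · exact hGmul _ _ (hGai 0) (hG v (by simp [hv]))
        · exact hGmul _ _ (hGb 0) (hG v (by simp [hv]))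
        · exact hGmul _ _ (hGai 0) (hG v (by simp [hv]))
end Mat

section Mon
variable {A : Type*} [Ring A] [Algebra ℂ A] {q : ℂ} {k : ℕ} {a : Fin k → Aˣ} {b : Fin k → A}

lemma prod_ofFn_qpow (hq0 : q ≠ 0) :
    ∀ {n : ℕ} (c : Fin n → ℤ), (List.ofFn fun i => q ^ c i).prod = q ^ (∑ i : Fin n, c i) := by
  intro n
  induction n with
  | zero => intro c; simp
  | succ n ih =>
    intro c
    rw [List.ofFn_succ, List.prod_cons, Fin.sum_univ_succ, zpow_add₀ hq0, ih fun i => c i.succ]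

lemma AP_mul (hca : ∀ i j, Commute ((a i : A)) ((a j : A))) (α α' : Fin k → ℤ) :
    (List.ofFn fun i => ((a i ^ α i : Aˣ) : A)).prod
      * (List.ofFn fun i => ((a i ^ α' i : Aˣ) : A)).prod
    = (List.ofFn fun i => ((a i ^ (α i + α' i) : Aˣ) : A)).prod := by
  rw [prod_ofFn_mul' _ _ (fun i j _ => by
    have h1 : Commute ((a i : A)) (((a j ^ α' j : Aˣ) : A)) := commute_units_zpow' (hca i j) _
    exact (commute_units_zpow' h1.symm _).symm)]
  have hfg : (fun i => ((a i ^ α i : Aˣ) : A) * ((a i ^ α' i : Aˣ) : A))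
      = fun i => ((a i ^ (α i + α' i) : Aˣ) : A) := by
    funext i
    rw [← Units.val_mul, ← zpow_add]
  rw [hfg]

lemma BP_mul (hcbb : ∀ i j, i ≠ j → Commute (b i) (b j)) (β β' : Fin k → ℕ) :
    (List.ofFn fun i => b i ^ β i).prod * (List.ofFn fun i => b i ^ β' i).prod
    = (List.ofFn fun i => b i ^ (β i + β' i)).prod := by
  rw [prod_ofFn_mul' _ _ (fun i j hij => by
    have : Commute (b i) (b j) := hcbb i j (by exact fun h => absurd (h ▸ hij) (lt_irrefl _))
    exact this.pow_pow _ _)]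
  have hfg : (fun i => b i ^ β i * b i ^ β' i) = fun i => b i ^ (β i + β' i) := by
    funext i
    rw [pow_add]
  rw [hfg]

lemma b_pow_move (hq0 : q ≠ 0) (hba : ∀ i, b i * (a i : A) = q • ((a i : A) * b i))
    (hcba : ∀ i j, i ≠ j → Commute (b i) ((a j : A)))
    (i : Fin k) (m : ℕ) (α' : Fin k → ℤ) :
    b i ^ m * (List.ofFn fun j => ((a j ^ α' j : Aˣ) : A)).prod
      = q ^ ((m : ℤ) * α' i) • ((List.ofFn fun j => ((a j ^ α' j : Aˣ) : A)).prod * b i ^ m) := by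
  have key := move_right' (b i ^ m)
    (List.ofFn fun j => (((a j ^ α' j : Aˣ) : A), if j = i then (q ^ α' i) ^ m else 1))
    (by
      intro p hp
      rw [List.mem_ofFn] at hp
      obtain ⟨j, rfl⟩ := hp
      by_cases hji : j = i
      · subst hji
        simp only [if_pos rfl]
        exact move_pow' (move_unit_zpow' hq0 (hba j) (α' j)) m
      · simp only [if_neg hji, one_smul]
        have : Commute (b i) (((a j ^ α' j : Aˣ) : A)) :=
          commute_units_zpow' (hcba i j fun h => hji h.symm) _
        exact ((this.symm.pow_right m).symm).eq)
  rw [List.map_ofFn, List.map_ofFn] at key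
  have h1 : (List.ofFn (Prod.fst ∘ fun j => (((a j ^ α' j : Aˣ) : A),
      if j = i then (q ^ α' i) ^ m else 1))) = List.ofFn fun j => ((a j ^ α' j : Aˣ) : A) := rfl
  have h2 : (List.ofFn (Prod.snd ∘ fun j => (((a j ^ α' j : Aˣ) : A),
      if j = i then (q ^ α' i) ^ m else 1))).prod = q ^ ((m : ℤ) * α' i) := by
    rw [prod_ofFn_single' _ i (fun j hj => by simp [Function.comp, if_neg hj])]
    show (if i = i then (q ^ α' i) ^ m else 1) = _
    rw [if_pos rfl, ← zpow_natCast (q ^ α' i) m, ← zpow_mul, mul_comm]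
  rw [h1, h2] at key
  exact key

lemma BP_move (hq0 : q ≠ 0) (hba : ∀ i, b i * (a i : A) = q • ((a i : A) * b i))
    (hcba : ∀ i j, i ≠ j → Commute (b i) ((a j : A))) (β : Fin k → ℕ) (α' : Fin k → ℤ) :
    (List.ofFn fun i => b i ^ β i).prod * (List.ofFn fun j => ((a j ^ α' j : Aˣ) : A)).prod
      = q ^ (∑ i : Fin k, (β i : ℤ) * α' i) •
        ((List.ofFn fun j => ((a j ^ α' j : Aˣ) : A)).prod * (List.ofFn fun i => b i ^ β i).prod) := by
  have key := move_left' ((List.ofFn fun j => ((a j ^ α' j : Aˣ) : A)).prod)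
    (List.ofFn fun i => (b i ^ β i, q ^ ((β i : ℤ) * α' i)))
    (by
      intro p hp
      rw [List.mem_ofFn] at hp
      obtain ⟨j, rfl⟩ := hp
      exact b_pow_move hq0 hba hcba j (β j) α')
  rw [List.map_ofFn, List.map_ofFn] at key
  have h1 : (List.ofFn (Prod.fst ∘ fun i => (b i ^ β i, q ^ ((β i : ℤ) * α' i))))
      = List.ofFn fun i => b i ^ β i := rfl
  have h2 : (List.ofFn (Prod.snd ∘ fun i => (b i ^ β i, q ^ ((β i : ℤ) * α' i)))).prod
      = q ^ (∑ i : Fin k, (β i : ℤ) * α' i) := by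
    show (List.ofFn fun i => q ^ ((β i : ℤ) * α' i)).prod = _
    exact prod_ofFn_qpow hq0 fun i => (β i : ℤ) * α' i
  rw [h1, h2] at key
  exact key

end Mon

section Mon2
variable {A : Type*} [Ring A] [Algebra ℂ A] {q : ℂ} {k : ℕ} {a : Fin k → Aˣ} {b : Fin k → A}

lemma qMonomial_mul (hq0 : q ≠ 0) (hba : ∀ i, b i * (a i : A) = q • ((a i : A) * b i))
    (hca : ∀ i j, Commute ((a i : A)) ((a j : A)))
    (hcba : ∀ i j, i ≠ j → Commute (b i) ((a j : A)))
    (hcbb : ∀ i j, i ≠ j → Commute (b i) (b j))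
    (m m' : (Fin k → ℤ) × (Fin k → ℕ)) :
    qMonomial a b m * qMonomial a b m'
      = q ^ (∑ i : Fin k, (m.2 i : ℤ) * m'.1 i) • qMonomial a b (m.1 + m'.1, m.2 + m'.2) := by
  obtain ⟨α, β⟩ := m
  obtain ⟨α', β'⟩ := m'
  show ((List.ofFn fun i => ((a i ^ α i : Aˣ) : A)).prod * (List.ofFn fun i => b i ^ β i).prod)
      * ((List.ofFn fun i => ((a i ^ α' i : Aˣ) : A)).prod * (List.ofFn fun i => b i ^ β' i).prod)
    = _ • ((List.ofFn fun i => ((a i ^ (α + α') i : Aˣ) : A)).prod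
      * (List.ofFn fun i => b i ^ (β + β') i).prod)
  calc ((List.ofFn fun i => ((a i ^ α i : Aˣ) : A)).prod * (List.ofFn fun i => b i ^ β i).prod)
      * ((List.ofFn fun i => ((a i ^ α' i : Aˣ) : A)).prod * (List.ofFn fun i => b i ^ β' i).prod)
      = (List.ofFn fun i => ((a i ^ α i : Aˣ) : A)).prod
        * ((List.ofFn fun i => b i ^ β i).prod * (List.ofFn fun i => ((a i ^ α' i : Aˣ) : A)).prod)
        * (List.ofFn fun i => b i ^ β' i).prod := by
        rw [mul_assoc, mul_assoc, mul_assoc]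
    _ = q ^ (∑ i : Fin k, (β i : ℤ) * α' i) •
        ((List.ofFn fun i => ((a i ^ α i : Aˣ) : A)).prod
          * ((List.ofFn fun i => ((a i ^ α' i : Aˣ) : A)).prod * (List.ofFn fun i => b i ^ β i).prod)
          * (List.ofFn fun i => b i ^ β' i).prod) := by
        rw [BP_move hq0 hba hcba β α', mul_smul_comm, smul_mul_assoc]
    _ = q ^ (∑ i : Fin k, (β i : ℤ) * α' i) •
        (((List.ofFn fun i => ((a i ^ α i : Aˣ) : A)).prod
          * (List.ofFn fun i => ((a i ^ α' i : Aˣ) : A)).prod)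
          * ((List.ofFn fun i => b i ^ β i).prod * (List.ofFn fun i => b i ^ β' i).prod)) := by
        congr 1
        rw [mul_assoc, mul_assoc, mul_assoc]
    _ = q ^ (∑ i : Fin k, (β i : ℤ) * α' i) •
        ((List.ofFn fun i => ((a i ^ (α + α') i : Aˣ) : A)).prod
          * (List.ofFn fun i => b i ^ (β + β') i).prod) := by
        rw [AP_mul hca α α', BP_mul hcbb β β']
        rfl

lemma good_one' : qMonomial a b (0, 0) = 1 := by
  show (List.ofFn fun i => ((a i ^ (0 : ℤ) : Aˣ) : A)).prod
      * (List.ofFn fun i => b i ^ (0 : ℕ)).prod = 1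
  rw [prod_ofFn_one' _ fun j => by simp, prod_ofFn_one' _ fun j => by simp, one_mul]

lemma good_a' (i : Fin k) : qMonomial a b (Pi.single i 1, 0) = (a i : A) := by
  show (List.ofFn fun j => ((a j ^ (Pi.single i 1 : Fin k → ℤ) j : Aˣ) : A)).prod
      * (List.ofFn fun j => b j ^ (0 : ℕ)).prod = (a i : A)
  rw [prod_ofFn_one' (fun j => b j ^ (0 : ℕ)) fun j => by simp, mul_one,
    prod_ofFn_single' _ i fun j hj => by simp [Pi.single_eq_of_ne hj]]
  simp

lemma good_ainv' (i : Fin k) : qMonomial a b (Pi.single i (-1), 0) = (((a i)⁻¹ : Aˣ) : A) := by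
  show (List.ofFn fun j => ((a j ^ (Pi.single i (-1) : Fin k → ℤ) j : Aˣ) : A)).prod
      * (List.ofFn fun j => b j ^ (0 : ℕ)).prod = _
  rw [prod_ofFn_one' (fun j => b j ^ (0 : ℕ)) fun j => by simp, mul_one,
    prod_ofFn_single' _ i fun j hj => by simp [Pi.single_eq_of_ne hj]]
  simp

lemma good_b' (i : Fin k) : qMonomial a b (0, Pi.single i 1) = b i := by
  show (List.ofFn fun j => ((a j ^ (0 : ℤ) : Aˣ) : A)).prod
      * (List.ofFn fun j => b j ^ (Pi.single i 1 : Fin k → ℕ) j).prod = b i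
  rw [prod_ofFn_one' _ fun j => by simp, one_mul,
    prod_ofFn_single' _ i fun j hj => by simp [Pi.single_eq_of_ne hj]]
  simp

end Mon2

section MainAux
variable {A : Type*} [Ring A] [Algebra ℂ A] {q : ℂ} {k : ℕ} {a : Fin k → Aˣ} {b : Fin k → A}

lemma isQMono_mul (hq0 : q ≠ 0) (hba : ∀ i, b i * (a i : A) = q • ((a i : A) * b i))
    (hca : ∀ i j, Commute ((a i : A)) ((a j : A)))
    (hcba : ∀ i j, i ≠ j → Commute (b i) ((a j : A)))
    (hcbb : ∀ i j, i ≠ j → Commute (b i) (b j)) {u v : A}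
    (hu : ∃ p : ℤ × ((Fin k → ℤ) × (Fin k → ℕ)), u = q ^ p.1 • qMonomial a b p.2)
    (hv : ∃ p : ℤ × ((Fin k → ℤ) × (Fin k → ℕ)), v = q ^ p.1 • qMonomial a b p.2) :
    ∃ p : ℤ × ((Fin k → ℤ) × (Fin k → ℕ)), u * v = q ^ p.1 • qMonomial a b p.2 := by
  obtain ⟨p, rfl⟩ := hu
  obtain ⟨p', rfl⟩ := hv
  refine ⟨(p.1 + p'.1 + ∑ i : Fin k, (p.2.2 i : ℤ) * p'.2.1 i,
    (p.2.1 + p'.2.1, p.2.2 + p'.2.2)), ?_⟩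
  calc (q ^ p.1 • qMonomial a b p.2) * (q ^ p'.1 • qMonomial a b p'.2)
      = (q ^ p.1 * q ^ p'.1) • (qMonomial a b p.2 * qMonomial a b p'.2) := by
        rw [smul_mul_assoc, mul_smul_comm, smul_smul]
    _ = (q ^ p.1 * q ^ p'.1 * q ^ (∑ i : Fin k, (p.2.2 i : ℤ) * p'.2.1 i)) •
        qMonomial a b (p.2.1 + p'.2.1, p.2.2 + p'.2.2) := by
        rw [qMonomial_mul hq0 hba hca hcba hcbb, smul_smul]
    _ = _ := by rw [← zpow_add₀ hq0, ← zpow_add₀ hq0]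

end MainAux

/-- Positivity and exact count of monomials: if `q` is transcendental and the monomials
`∏ aᵢ^{αᵢ} bᵢ^{βᵢ}` are linearly independent (i.e. `A = ⊗ᵢ ℂ[aᵢ^{±1}, bᵢ]^q`), then
`T_n(Trace A₁⋯A_k)` is a sum of exactly `T_n(t₀)` monomials `q^ξ ∏ᵢ aᵢ^{αᵢ} bᵢ^{βᵢ}`,
each with coefficient `+1`, where `t₀ = Trace A₁⁽⁰⁾⋯A_k⁽⁰⁾`. -/
theorem chebT_trace_monomial_count {A : Type*} [Ring A] [Algebra ℂ A]
    (q : ℂ) (hq : Transcendental ℚ q) {k : ℕ}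
    (a : Fin k → Aˣ) (b : Fin k → A) (upper : Fin k → Bool)
    (hba : ∀ i, b i * (a i : A) = q • ((a i : A) * b i))
    (hcomm : ∀ i j, i ≠ j →
      Commute ((a i : A)) ((a j : A)) ∧ Commute ((a i : A)) (b j) ∧
      Commute (b i) ((a j : A)) ∧ Commute (b i) (b j))
    (hind : LinearIndependent ℂ (fun m : (Fin k → ℤ) × (Fin k → ℕ) => qMonomial a b m))
    (n : ℕ) :
    ∃ s : Multiset (ℤ × (Fin k → ℤ) × (Fin k → ℕ)),
      Multiset.card s =
        (chebT n (Matrix.trace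
          (List.ofFn fun i =>
            if upper i then !![(1 : ℤ), 1; 0, 1] else !![1, 0; 1, 1]).prod)).toNat ∧
      chebT n (Matrix.trace (List.ofFn fun i => triMat (upper i) (a i) (b i)).prod)
        = (s.map fun m => q ^ m.1 • qMonomial a b m.2).sum := by
  classical
  have hq0 : q ≠ 0 := by
    rintro rfl
    exact hq isAlgebraic_zero
  have hca : ∀ i j, Commute ((a i : A)) ((a j : A)) := by
    intro i j
    rcases eq_or_ne i j with rfl | h
    · exact Commute.refl _
    · exact (hcomm i j h).1
  have hcba : ∀ i j, i ≠ j → Commute (b i) ((a j : A)) := fun i j h => (hcomm i j h).2.2.1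
  have hcbb : ∀ i j, i ≠ j → Commute (b i) (b j) := fun i j h => (hcomm i j h).2.2.2
  set G : A → Prop := fun w => ∃ p : ℤ × ((Fin k → ℤ) × (Fin k → ℕ)),
    w = q ^ p.1 • qMonomial a b p.2 with hGdef
  have hG1 : G 1 := ⟨(0, (0, 0)), by rw [good_one']; simp⟩
  have hGmul : ∀ u v, G u → G v → G (u * v) :=
    fun u v hu hv => isQMono_mul hq0 hba hca hcba hcbb hu hv
  have hGa : ∀ i, G ((a i : A)) := fun i => ⟨(0, (Pi.single i 1, 0)), by rw [good_a']; simp⟩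
  have hGai : ∀ i, G (((a i)⁻¹ : Aˣ) : A) :=
    fun i => ⟨(0, (Pi.single i (-1), 0)), by rw [good_ainv']; simp⟩
  have hGb : ∀ i, G (b i) := fun i => ⟨(0, (0, Pi.single i 1)), by rw [good_b']; simp⟩
  obtain ⟨R00, R01, R10, R11, hM, hN, hGR⟩ := matProd G hG1 hGmul a b upper hca hGa hGai hGb
  set X : Aˣ := (List.ofFn a).prod with hX
  have hGX : G ((X : Aˣ) : A) := by
    refine good_units_prod G hG1 hGmul _ ?_
    intro u hu
    rw [List.mem_ofFn] at hu
    obtain ⟨j, rfl⟩ := hu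
    exact hGa j
  have hGXi : G ((X⁻¹ : Aˣ) : A) := by
    refine good_units_prod_inv G hG1 hGmul _ ?_
    intro u hu
    rw [List.mem_ofFn] at hu
    obtain ⟨j, rfl⟩ := hu
    exact hGai j
  have hRsub : ∀ r ∈ R00 + R11, G r := by
    intro r hr
    rcases Multiset.mem_add.mp hr with h | h
    · exact hGR r (by simp [Multiset.mem_add, h])
    · exact hGR r (by simp [Multiset.mem_add, h])
  obtain ⟨W, hWcard, hWsum, hWgood⟩ := cheb_pos ((X : Aˣ) : A) ((X⁻¹ : Aˣ) : A)
    (Units.mul_inv X) (Units.inv_mul X)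
    (R00 + R11) G hG1 hGX hGXi hRsub hGmul n
  have htr : Matrix.trace ((List.ofFn fun i => triMat (upper i) (a i) (b i)).prod)
      = ((X : Aˣ) : A) + ((X⁻¹ : Aˣ) : A) + (R00 + R11).sum := by
    rw [hM, Matrix.trace_fin_two_of, Multiset.sum_add]
    abel
  have htrN : Matrix.trace ((List.ofFn fun i =>
        if upper i then !![(1 : ℤ), 1; 0, 1] else !![1, 0; 1, 1]).prod)
      = 2 + (Multiset.card (R00 + R11) : ℤ) := by
    rw [hN, Matrix.trace_fin_two_of, Multiset.card_add]
    push_cast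
    ring
  refine ⟨W.map (fun w => if h : ∃ p : ℤ × ((Fin k → ℤ) × (Fin k → ℕ)),
      w = q ^ p.1 • qMonomial a b p.2 then h.choose else (0, (0, 0))), ?_, ?_⟩
  · rw [htrN, ← hWcard, Int.toNat_natCast, Multiset.card_map]
  · rw [htr, hWsum, Multiset.map_map]
    have hid : ∀ w ∈ W, ((fun m : ℤ × ((Fin k → ℤ) × (Fin k → ℕ)) =>
        q ^ m.1 • qMonomial a b m.2) ∘
        (fun w => if h : ∃ p : ℤ × ((Fin k → ℤ) × (Fin k → ℕ)),
          w = q ^ p.1 • qMonomial a b p.2 then h.choose else (0, (0, 0)))) w = id w := by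
      intro w hw
      have hex : ∃ p : ℤ × ((Fin k → ℤ) × (Fin k → ℕ)),
          w = q ^ p.1 • qMonomial a b p.2 := hWgood w hw
      simp only [Function.comp, dif_pos hex, id]
      exact hex.choose_spec.symm
    rw [Multiset.map_congr rfl hid, Multiset.map_id]
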